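/- Let A be a real 4×4 matrix whose complexification has exactly the four distinct eigenvalues γ + δi, γ − δi, −γ + δi, −γ − δi, with γ > 0 and δ ≠ 0. Then there exists a constant C > 0, depending only on A, such that for every L > 0, every T > 0, every 0 < λ ≤ γ, and every differentiable y : [0,T] → ℝ⁴ satisfying y'(t) = A y(t) and |y(t)| ≤ L for all t ∈ [0,T], one has |y(t)| ≤ C L exp(−λT/2) for all t ∈ [λT/(2γ), T − λT/(2γ)]. -/

import Mathlib

open MeasureTheory Real Matrix Polynomial

lemma my_eval_charpoly {n : Type*} [Fintype n] [DecidableEq n] (M : Matrix n n ℂ) (x : ℂ) :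
    M.charpoly.eval x = (Matrix.diagonal (fun _ => x) - M).det := by
  rw [Matrix.charpoly, ← Polynomial.coe_evalRingHom, RingHom.map_det]
  congr 1
  ext i j
  by_cases h : i = j <;>
    simp [h, Matrix.charmatrix_apply, Matrix.diagonal, Matrix.sub_apply]

lemma exists_left_eigenvector (Ac : Matrix (Fin 4) (Fin 4) ℂ) (x : ℂ)
    (h : Ac.charpoly.IsRoot x) :
    ∃ v : Fin 4 → ℂ, v ≠ 0 ∧ Matrix.vecMul v Ac = x • v := by
  have h1 : (Matrix.diagonal (fun _ : Fin 4 => x) - Ac).det = 0 := by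
    rw [← my_eval_charpoly]; exact h
  have h2 : (Ac - Matrix.diagonal fun _ : Fin 4 => x).det = 0 := by
    have heq : (Ac - Matrix.diagonal fun _ : Fin 4 => x)
        = -(Matrix.diagonal (fun _ : Fin 4 => x) - Ac) := by
      simp [neg_sub]
    rw [heq, Matrix.det_neg, h1]
    simp
  have hdet : (Acᵀ - Matrix.diagonal (fun _ : Fin 4 => x)).det = 0 := by
    have : (Acᵀ - Matrix.diagonal (fun _ : Fin 4 => x))
        = (Ac - Matrix.diagonal fun _ : Fin 4 => x)ᵀ := by
      rw [Matrix.transpose_sub, Matrix.diagonal_transpose]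
    rw [this, Matrix.det_transpose]
    exact h2
  obtain ⟨v, hv0, hv⟩ := (Matrix.exists_mulVec_eq_zero_iff).2 hdet
  refine ⟨v, hv0, ?_⟩
  rw [Matrix.sub_mulVec, sub_eq_zero] at hv
  rw [← Matrix.mulVec_transpose, hv]
  ext j
  simp [Matrix.mulVec_diagonal, mul_comm]

lemma ode_scalar {T : ℝ} (μ : ℂ) (z : ℝ → ℂ)
    (hz : ∀ t ∈ Set.Icc (0:ℝ) T, HasDerivAt z (μ * z t) t) :
    ∀ t ∈ Set.Icc (0:ℝ) T, z t = z 0 * Complex.exp (μ * t) := by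
  intro t ht
  set g : ℝ → ℂ := fun s => z s * Complex.exp (-μ * (s:ℂ)) with hg
  have hgd : ∀ s ∈ Set.Icc (0:ℝ) T, HasDerivAt g 0 s := by
    intro s hs
    have hcast : HasDerivAt (fun u : ℝ => (u : ℂ)) 1 s := by
      simpa using (hasDerivAt_id s).ofReal_comp
    have hlin : HasDerivAt (fun u : ℝ => -μ * (u:ℂ)) (-μ) s := by
      simpa using hcast.const_mul (-μ)
    have hexp : HasDerivAt (fun u : ℝ => Complex.exp (-μ * (u:ℂ)))
        (Complex.exp (-μ * (s:ℂ)) * (-μ)) s := hlin.cexp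
    have := (hz s hs).fun_mul hexp
    exact this.congr_deriv (by ring)
  have hcont : ContinuousOn g (Set.Icc 0 t) := fun s hs =>
    ((hgd s ⟨hs.1, le_trans hs.2 ht.2⟩).continuousAt).continuousWithinAt
  have hconst := constant_of_has_deriv_right_zero hcont
    (fun s hs => ((hgd s ⟨hs.1, le_trans (le_of_lt hs.2) ht.2⟩).hasDerivWithinAt)) t
    (by exact ⟨ht.1, le_refl t⟩)
  have key : z t * Complex.exp (-μ * (t:ℂ)) = z 0 := by
    simpa [g] using hconst
  calc z t = z t * Complex.exp (-μ * (t:ℂ)) * Complex.exp (μ * (t:ℂ)) := by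
        rw [mul_assoc, ← Complex.exp_add]
        ring_nf
        simp
    _ = z 0 * Complex.exp (μ * t) := by rw [key]

lemma coord_le_norm (x : EuclideanSpace ℝ (Fin 4)) (j : Fin 4) : |x j| ≤ ‖x‖ := by
  rw [EuclideanSpace.norm_eq, ← Real.sqrt_sq_eq_abs]
  apply Real.sqrt_le_sqrt
  have := Finset.single_le_sum (f := fun i => ‖x i‖ ^ 2)
    (fun i _ => sq_nonneg _) (Finset.mem_univ j)
  simpa [Real.norm_eq_abs, sq_abs] using this

lemma norm_le_of_coords {x : EuclideanSpace ℝ (Fin 4)} {c : ℝ} (hc : 0 ≤ c)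
    (h : ∀ j, |x j| ≤ c) : ‖x‖ ≤ 2 * c := by
  rw [EuclideanSpace.norm_eq]
  have hsum : ∑ j, ‖x j‖ ^ 2 ≤ ∑ _j : Fin 4, c ^ 2 :=
    Finset.sum_le_sum fun j _ => by
      rw [Real.norm_eq_abs]
      exact pow_le_pow_left₀ (abs_nonneg _) (h j) 2
  calc Real.sqrt (∑ j, ‖x j‖ ^ 2) ≤ Real.sqrt (4 * c ^ 2) := by
        apply Real.sqrt_le_sqrt
        simpa using hsum
    _ = 2 * c := by
        rw [show (4:ℝ) * c ^ 2 = (2*c)^2 by ring, Real.sqrt_sq (by positivity)]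

set_option maxHeartbeats 1000000 in
theorem stmt9 (A : Matrix (Fin 4) (Fin 4) ℝ)
    (γ δ : ℝ) (hγ : 0 < γ) (hδ : δ ≠ 0)
    -- the complexification of A has exactly the four simple eigenvalues ±γ ± δi
    (hspec : ((A.map (fun r : ℝ => (r : ℂ))).charpoly).roots =
      {(γ : ℂ) + δ * Complex.I, (γ : ℂ) - δ * Complex.I,
        -(γ : ℂ) + δ * Complex.I, -(γ : ℂ) - δ * Complex.I}) :
    ∃ C > (0:ℝ), ∀ L : ℝ, 0 < L → ∀ T : ℝ, 0 < T → ∀ lam : ℝ, 0 < lam → lam ≤ γ →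
      ∀ y : ℝ → EuclideanSpace ℝ (Fin 4),
        (∀ t ∈ Set.Icc (0:ℝ) T,
          HasDerivAt y ((WithLp.equiv 2 (Fin 4 → ℝ)).symm
            (A.mulVec ((WithLp.equiv 2 (Fin 4 → ℝ)) (y t)))) t) →
        (∀ t ∈ Set.Icc (0:ℝ) T, ‖y t‖ ≤ L) →
        ∀ t ∈ Set.Icc (lam * T / (2 * γ)) (T - lam * T / (2 * γ)),
          ‖y t‖ ≤ C * L * Real.exp (-lam * T / 2) := by
  classical
  set Ac : Matrix (Fin 4) (Fin 4) ℂ := A.map (fun r : ℝ => (r : ℂ)) with hAcdef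
  set μ : Fin 4 → ℂ := ![(γ : ℂ) + δ * Complex.I, (γ : ℂ) - δ * Complex.I,
      -(γ : ℂ) + δ * Complex.I, -(γ : ℂ) - δ * Complex.I] with hμdef
  have hμroot : ∀ i, Ac.charpoly.IsRoot (μ i) := by
    intro i
    apply Polynomial.isRoot_of_mem_roots
    rw [hspec]
    fin_cases i <;> simp [μ]
  have hμre : ∀ i, (μ i).re = γ ∨ (μ i).re = -γ := by
    intro i
    fin_cases i <;> simp [μ]
  have hμinj : Function.Injective μ := by
    intro i j h
    fin_cases i <;> fin_cases j <;>
      first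
        | rfl
        | (exfalso
           simp [μ, Complex.ext_iff] at h
           first
             | exact hδ (by linarith)
             | linarith [h.1]
             | linarith)
  -- left eigenvectors
  have hev : ∀ i, ∃ v : Fin 4 → ℂ, v ≠ 0 ∧ Matrix.vecMul v Ac = μ i • v :=
    fun i => exists_left_eigenvector Ac (μ i) (hμroot i)
  choose w hw0 hwvm using hev
  -- linear independence of the eigenvectors
  have hli : LinearIndependent ℂ w := by
    apply Module.End.eigenvectors_linearIndependent' (Matrix.mulVecLin Acᵀ) μ hμinj
    intro i
    rw [Module.End.hasEigenvector_iff]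
    refine ⟨Module.End.mem_eigenspace_iff.mpr ?_, hw0 i⟩
    show Acᵀ.mulVec (w i) = μ i • w i
    rw [Matrix.mulVec_transpose]
    exact hwvm i
  set W : Matrix (Fin 4) (Fin 4) ℂ := Matrix.of w with hWdef
  have hWunit : IsUnit W := Matrix.linearIndependent_rows_iff_isUnit.mp hli
  have hWdetunit : IsUnit W.det := (Matrix.isUnit_iff_isUnit_det W).mp hWunit
  have hWinv : ∀ v : Fin 4 → ℂ, W⁻¹.mulVec (W.mulVec v) = v := by
    intro v
    rw [Matrix.mulVec_mulVec, Matrix.nonsing_inv_mul W hWdetunit, Matrix.one_mulVec]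
  -- constants
  set Mc : ℝ := (∑ i, ∑ j, ‖w i j‖) + 1 with hMcdef
  set Kc : ℝ := (∑ j, ∑ i, ‖W⁻¹ j i‖) + 1 with hKcdef
  have hMcpos : 0 < Mc := by
    rw [hMcdef]
    positivity
  have hKcpos : 0 < Kc := by
    rw [hKcdef]
    positivity
  refine ⟨2 * Kc * Mc, by positivity, ?_⟩
  intro L hL T hT lam hlam hlamγ y hy hyL t ht
  set a : ℝ := lam * T / (2 * γ) with hadef
  have hapos : 0 < a := by positivity
  have haγ : γ * a = lam * T / 2 := by
    rw [hadef]
    field_simp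
  have htmem : t ∈ Set.Icc (0:ℝ) T := by
    constructor
    · linarith [ht.1]
    · linarith [ht.2]
  have hTmem : T ∈ Set.Icc (0:ℝ) T := ⟨le_of_lt hT, le_refl T⟩
  have h0mem : (0:ℝ) ∈ Set.Icc (0:ℝ) T := ⟨le_refl 0, le_of_lt hT⟩
  -- complexified solution components
  set z : Fin 4 → ℝ → ℂ := fun i s => dotProduct (w i) (fun j => ((y s j : ℝ) : ℂ))
    with hzdef
  -- derivative of z
  have hzderiv : ∀ i, ∀ s ∈ Set.Icc (0:ℝ) T, HasDerivAt (z i) (μ i * z i s) s := by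
    intro i s hs
    have hys := hy s hs
    have hcomp : ∀ j : Fin 4, HasDerivAt (fun u => y u j)
        (A.mulVec (fun k => y s k) j) s := by
      intro j
      have := (EuclideanSpace.proj j :
        EuclideanSpace ℝ (Fin 4) →L[ℝ] ℝ).hasFDerivAt.comp_hasDerivAt s hys
      simpa [WithLp.equiv, Function.comp_def] using this
    have hcompc : ∀ j : Fin 4, HasDerivAt (fun u => ((y u j : ℝ) : ℂ))
        ((A.mulVec (fun k => y s k) j : ℝ) : ℂ) s := fun j =>
      Complex.ofRealCLM.hasFDerivAt.comp_hasDerivAt s (hcomp j)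
    have hsum : HasDerivAt (fun u => ∑ j, w i j * ((y u j : ℝ):ℂ))
        (∑ j, w i j * ((A.mulVec (fun k => y s k) j : ℝ):ℂ)) s :=
      HasDerivAt.fun_sum fun j _ => (hcompc j).const_mul (w i j)
    have heq : (∑ j, w i j * ((A.mulVec (fun k => y s k) j : ℝ):ℂ)) = μ i * z i s := by
      have h1 : (∑ j, w i j * ((A.mulVec (fun k => y s k) j : ℝ):ℂ))
          = dotProduct (w i) (Ac.mulVec (fun k => ((y s k : ℝ):ℂ))) := by
        simp only [dotProduct, Matrix.mulVec, Ac, Matrix.map_apply]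
        push_cast
        ring
      rw [h1, dotProduct_mulVec, hwvm i, smul_dotProduct]
      simp [z, smul_eq_mul]
    rw [← heq]
    simpa [z, dotProduct] using hsum
  have hzsol : ∀ i, ∀ s ∈ Set.Icc (0:ℝ) T, z i s = z i 0 * Complex.exp (μ i * s) :=
    fun i => ode_scalar (μ i) (z i) (hzderiv i)
  have habs : ∀ i, ∀ s ∈ Set.Icc (0:ℝ) T,
      ‖z i s‖ = ‖z i 0‖ * Real.exp ((μ i).re * s) := by
    intro i s hs
    rw [hzsol i s hs, norm_mul, Complex.norm_exp]
    congr 2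
    simp [Complex.mul_re]
  -- a priori bound on z
  have hzbound : ∀ i, ∀ s ∈ Set.Icc (0:ℝ) T, ‖z i s‖ ≤ Mc * L := by
    intro i s hs
    have h1 : ‖z i s‖ ≤ ∑ j, ‖w i j * ((y s j : ℝ):ℂ)‖ :=
      norm_sum_le _ _
    have h2 : ∑ j, ‖w i j * ((y s j : ℝ):ℂ)‖
        ≤ ∑ j, ‖w i j‖ * L := by
      apply Finset.sum_le_sum
      intro j _
      rw [norm_mul, Complex.norm_real]
      exact mul_le_mul_of_nonneg_left ((coord_le_norm (y s) j).trans (hyL s hs))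
        (norm_nonneg _)
    have h3 : ∑ j, ‖w i j‖ * L ≤ Mc * L := by
      rw [← Finset.sum_mul]
      apply mul_le_mul_of_nonneg_right _ hL.le
      have h4 : ∑ j, ‖w i j‖ ≤ ∑ i, ∑ j, ‖w i j‖ :=
        Finset.single_le_sum (f := fun i => ∑ j, ‖w i j‖)
          (fun i _ => Finset.sum_nonneg fun j _ => norm_nonneg _)
          (Finset.mem_univ i)
      rw [hMcdef]
      linarith
    exact h1.trans (h2.trans h3)
  -- the decisive bound at time t
  have hzt : ∀ i, ‖z i t‖ ≤ Mc * L * Real.exp (-lam * T / 2) := by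
    intro i
    have ha1 : a ≤ t := ht.1
    have ha2 : t ≤ T - a := ht.2
    rcases hμre i with h | h
    · -- unstable eigenvalue: compare with the value at time T
      have hT' := habs i T hTmem
      have ht' := habs i t htmem
      rw [h] at hT' ht'
      have hb : ‖z i 0‖ * Real.exp (γ * T) ≤ Mc * L := by
        rw [← hT']
        exact hzbound i T hTmem
      have hexp : Real.exp (γ * t) ≤ Real.exp (γ * T) * Real.exp (-lam * T / 2) := by
        rw [← Real.exp_add]
        apply Real.exp_le_exp.mpr
        nlinarith [mul_le_mul_of_nonneg_left ha2 hγ.le, haγ]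
      calc ‖z i t‖ = ‖z i 0‖ * Real.exp (γ * t) := ht'
        _ ≤ ‖z i 0‖ * (Real.exp (γ * T) * Real.exp (-lam * T / 2)) :=
            mul_le_mul_of_nonneg_left hexp (norm_nonneg _)
        _ = (‖z i 0‖ * Real.exp (γ * T)) * Real.exp (-lam * T / 2) := by ring
        _ ≤ Mc * L * Real.exp (-lam * T / 2) :=
            mul_le_mul_of_nonneg_right hb (Real.exp_pos _).le
    · -- stable eigenvalue: decay from time 0
      have ht' := habs i t htmem
      rw [h] at ht'
      have hb := hzbound i 0 h0mem
      have hexp : Real.exp (-γ * t) ≤ Real.exp (-lam * T / 2) := by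
        apply Real.exp_le_exp.mpr
        nlinarith [mul_le_mul_of_nonneg_left ha1 hγ.le, haγ]
      calc ‖z i t‖ = ‖z i 0‖ * Real.exp (-γ * t) := ht'
        _ ≤ (Mc * L) * Real.exp (-lam * T / 2) :=
            mul_le_mul hb hexp (Real.exp_pos _).le (by positivity)
  -- recovery of y from z
  have hrecover : ∀ j, |y t j| ≤ Kc * (Mc * L * Real.exp (-lam * T / 2)) := by
    intro j
    have hWz : W.mulVec (fun k => ((y t k : ℝ):ℂ)) = fun i => z i t := by
      funext i
      simp [W, Matrix.mulVec, z, dotProduct]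
    have hYW : (fun k => ((y t k : ℝ):ℂ)) = W⁻¹.mulVec (fun i => z i t) := by
      rw [← hWz, hWinv]
    have hyj : ((y t j : ℝ):ℂ) = ∑ i, W⁻¹ j i * z i t := by
      simpa [Matrix.mulVec, dotProduct] using congrFun hYW j
    have habs' : |y t j| = ‖((y t j : ℝ):ℂ)‖ := (Complex.norm_real _).symm
    rw [habs', hyj]
    have h1 : ‖∑ i, W⁻¹ j i * z i t‖ ≤ ∑ i, ‖W⁻¹ j i * z i t‖ :=
      norm_sum_le _ _
    have h2 : ∑ i, ‖W⁻¹ j i * z i t‖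
        ≤ ∑ i, ‖W⁻¹ j i‖ * (Mc * L * Real.exp (-lam * T / 2)) := by
      apply Finset.sum_le_sum
      intro i _
      rw [norm_mul]
      exact mul_le_mul_of_nonneg_left (hzt i) (norm_nonneg _)
    have h3 : ∑ i, ‖W⁻¹ j i‖ * (Mc * L * Real.exp (-lam * T / 2))
        ≤ Kc * (Mc * L * Real.exp (-lam * T / 2)) := by
      rw [← Finset.sum_mul]
      apply mul_le_mul_of_nonneg_right _
        (mul_nonneg (mul_nonneg hMcpos.le hL.le) (Real.exp_pos _).le)
      have h4 : ∑ i, ‖W⁻¹ j i‖ ≤ ∑ j, ∑ i, ‖W⁻¹ j i‖ :=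
        Finset.single_le_sum (f := fun j => ∑ i, ‖W⁻¹ j i‖)
          (fun j _ => Finset.sum_nonneg fun i _ => norm_nonneg _)
          (Finset.mem_univ j)
      rw [hKcdef]
      linarith
    exact h1.trans (h2.trans h3)
  have := norm_le_of_coords (x := y t)
    (mul_nonneg hKcpos.le (mul_nonneg (mul_nonneg hMcpos.le hL.le) (Real.exp_pos _).le)) hrecover
  calc ‖y t‖ ≤ 2 * (Kc * (Mc * L * Real.exp (-lam * T / 2))) := this
    _ = 2 * Kc * Mc * L * Real.exp (-lam * T / 2) := by ring
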